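/- arXiv:1211.2481 — 2 statements merged into one kernel-verified Lean document; each statement's English description precedes it below -/
import Mathlib

section
/- Under compound symmetry with common variance S² > 0 and common correlation ρ satisfying −1/(2^K − 1) < ρ ≤ 1, for every nonempty subset A ⊆ {1,…,K} the sampling variance of the estimated factorial effect under a completely randomized assignment satisfies the bounds (4/N)(1 − 1/(2^K − 1)) S² < Var(τ̂_A) ≤ (4/N) S². -/
open Finset

noncomputable section

/-- A treatment combination in a 2^K factorial design: each of the K factors
is at its low level (`false`, coded −1) or high level (`true`, coded +1). -/
abbrev Combo (K : ℕ) := Fin K → Bool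

/-- The completely randomized assignments: each of the 2^K treatment
combinations receives exactly `r` of the `N` units. -/
def Assignments (K N r : ℕ) : Finset (Fin N → Combo K) :=
  Finset.univ.filter (fun ω => ∀ z : Combo K, (Finset.univ.filter (fun i => ω i = z)).card = r)

/-- Expectation over the uniform distribution on completely randomized assignments. -/
def expect (K N r : ℕ) (f : (Fin N → Combo K) → ℝ) : ℝ :=
  (∑ ω ∈ Assignments K N r, f ω) / ((Assignments K N r).card : ℝ)

/-- Variance over the uniform distribution on completely randomized assignments. -/
def variance (K N r : ℕ) (f : (Fin N → Combo K) → ℝ) : ℝ :=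
  expect K N r (fun ω => (f ω - expect K N r f) ^ 2)

/-- Covariance over the uniform distribution on completely randomized assignments. -/
def covariance (K N r : ℕ) (f g : (Fin N → Combo K) → ℝ) : ℝ :=
  expect K N r (fun ω => (f ω - expect K N r f) * (g ω - expect K N r g))

/-- The assignment indicator W_i(z). -/
def Wvar (K N : ℕ) (ω : Fin N → Combo K) (i : Fin N) (z : Combo K) : ℝ :=
  if ω i = z then 1 else 0

/-- The population mean Ȳ(z) of the potential outcomes under z. -/
def Ybar (K N : ℕ) (Y : Fin N → Combo K → ℝ) (z : Combo K) : ℝ :=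
  (∑ i, Y i z) / (N : ℝ)

/-- The observed treatment mean Ȳ^obs(z) = (1/r) Σ_{i : W_i(z)=1} Y_i(z). -/
def YbarObs (K N r : ℕ) (Y : Fin N → Combo K → ℝ)
    (ω : Fin N → Combo K) (z : Combo K) : ℝ :=
  (∑ i, if ω i = z then Y i z else 0) / (r : ℝ)

/-- Finite-population variance S²(z) (divisor N−1). -/
def Ssq (K N : ℕ) (Y : Fin N → Combo K → ℝ) (z : Combo K) : ℝ :=
  (∑ i, (Y i z - Ybar K N Y z) ^ 2) / ((N : ℝ) - 1)

/-- Finite-population covariance S²(z, z*) (divisor N−1). -/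
def Scov (K N : ℕ) (Y : Fin N → Combo K → ℝ) (z zs : Combo K) : ℝ :=
  (∑ i, (Y i z - Ybar K N Y z) * (Y i zs - Ybar K N Y zs)) / ((N : ℝ) - 1)

/-- The contrast g_A(z) = Π_{k ∈ A} z_k ∈ {−1, +1}. -/
def gA (K : ℕ) (A : Finset (Fin K)) (z : Combo K) : ℝ :=
  ∏ k ∈ A, (if z k then (1 : ℝ) else -1)

/-- The unit-level factorial effect τ_{iA} = 2^{−(K−1)} Σ_z g_A(z) Y_i(z). -/
def tauUnit (K N : ℕ) (Y : Fin N → Combo K → ℝ) (A : Finset (Fin K)) (i : Fin N) : ℝ :=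
  (∑ z : Combo K, gA K A z * Y i z) / (2 : ℝ) ^ (K - 1)

/-- The population-level factorial effect τ̄_A = (1/N) Σ_i τ_{iA}. -/
def tauBar (K N : ℕ) (Y : Fin N → Combo K → ℝ) (A : Finset (Fin K)) : ℝ :=
  (∑ i, tauUnit K N Y A i) / (N : ℝ)

/-- The estimated factorial effect τ̂_A = 2^{−(K−1)} Σ_z g_A(z) Ȳ^obs(z). -/
def tauHat (K N r : ℕ) (Y : Fin N → Combo K → ℝ) (A : Finset (Fin K))
    (ω : Fin N → Combo K) : ℝ :=
  (∑ z : Combo K, gA K A z * YbarObs K N r Y ω z) / (2 : ℝ) ^ (K - 1)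

/-- The finite-population variance S_A² of the unit-level factorial effects. -/
def SsqA (K N : ℕ) (Y : Fin N → Combo K → ℝ) (A : Finset (Fin K)) : ℝ :=
  (∑ i, (tauUnit K N Y A i - tauBar K N Y A) ^ 2) / ((N : ℝ) - 1)

/-- Strict additivity: unit-level differences of potential outcomes between any
two treatment combinations are constant across units. -/
def StrictAdditivity (K N : ℕ) (Y : Fin N → Combo K → ℝ) : Prop :=
  ∀ z zs : Combo K, ∀ i i' : Fin N, Y i z - Y i zs = Y i' z - Y i' zs

/-- Compound symmetry: common variance S² > 0 and common correlation ρ,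
i.e. S²(z) = S² for all z and S²(z,z*) = ρ S² for all z ≠ z*. -/
def CompoundSymmetry (K N : ℕ) (Y : Fin N → Combo K → ℝ) (S2 ρ : ℝ) : Prop :=
  0 < S2 ∧ (∀ z : Combo K, Ssq K N Y z = S2) ∧
    ∀ z zs : Combo K, z ≠ zs → Scov K N Y z zs = ρ * S2

lemma mem_Assignments {K N r : ℕ} {ω : Fin N → Combo K} :
    ω ∈ Assignments K N r ↔ ∀ z : Combo K, (Finset.univ.filter (fun i => ω i = z)).card = r := by
  simp [Assignments]

lemma card_Combo (K : ℕ) : Fintype.card (Combo K) = 2 ^ K := by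
  simp [Combo]

lemma card_filter_comp {N : ℕ} (σ : Equiv.Perm (Fin N)) (p : Fin N → Prop) [DecidablePred p] :
    (Finset.univ.filter fun i => p (σ i)).card = (Finset.univ.filter p).card := by
  have h : (Finset.univ.filter fun i => p (σ i)) = (Finset.univ.filter p).map σ.symm.toEmbedding := by
    ext i
    simp only [mem_filter, mem_map, mem_univ, true_and, Equiv.coe_toEmbedding]
    constructor
    · intro h; exact ⟨σ i, h, σ.symm_apply_apply i⟩
    · rintro ⟨j, hj, rfl⟩; simpa using hj
  rw [h, Finset.card_map]

lemma precomp_mem {K N r : ℕ} (σ : Equiv.Perm (Fin N)) {ω : Fin N → Combo K}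
    (hω : ω ∈ Assignments K N r) : (ω ∘ σ) ∈ Assignments K N r := by
  rw [mem_Assignments] at hω ⊢
  intro z
  simpa using (card_filter_comp σ (fun i => ω i = z)).trans (hω z)

lemma postcomp_mem {K N r : ℕ} (π : Equiv.Perm (Combo K)) {ω : Fin N → Combo K}
    (hω : ω ∈ Assignments K N r) : (π ∘ ω) ∈ Assignments K N r := by
  rw [mem_Assignments] at hω ⊢
  intro z
  have h : (Finset.univ.filter fun i => (π ∘ ω) i = z)
      = (Finset.univ.filter fun i => ω i = π.symm z) := by
    ext i; simp [Function.comp, Equiv.apply_eq_iff_eq_symm_apply]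
  rw [h]; exact hω _

lemma sum_precomp {K N r : ℕ} (σ : Equiv.Perm (Fin N)) (F : (Fin N → Combo K) → ℝ) :
    ∑ ω ∈ Assignments K N r, F (ω ∘ σ) = ∑ ω ∈ Assignments K N r, F ω := by
  apply Finset.sum_nbij' (fun ω => ω ∘ σ) (fun ω => ω ∘ σ.symm)
  · intro ω hω; exact precomp_mem σ hω
  · intro ω hω; exact precomp_mem σ.symm hω
  · intro ω _; funext i; simp
  · intro ω _; funext i; simp
  · intro ω _; rfl

lemma sum_postcomp {K N r : ℕ} (π : Equiv.Perm (Combo K)) (F : (Fin N → Combo K) → ℝ) :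
    ∑ ω ∈ Assignments K N r, F (π ∘ ω) = ∑ ω ∈ Assignments K N r, F ω := by
  apply Finset.sum_nbij' (fun ω => π ∘ ω) (fun ω => π.symm ∘ ω)
  · intro ω hω; exact postcomp_mem π hω
  · intro ω hω; exact postcomp_mem π.symm hω
  · intro ω _; funext i; simp
  · intro ω _; funext i; simp
  · intro ω _; rfl

set_option synthInstance.maxHeartbeats 1000000 in
lemma Assignments_nonempty {K N r : ℕ} (hN : N = r * 2 ^ K) :
    (Assignments K N r).Nonempty := by
  have e : Fin N ≃ Combo K × Fin r := by
    apply Fintype.equivOfCardEq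
    simp [card_Combo, hN, Nat.mul_comm]
  refine ⟨fun i => (e i).1, ?_⟩
  rw [mem_Assignments]
  intro z
  have h1 : (Finset.univ.filter fun i => (e i).1 = z).card
      = (Finset.univ.filter fun p : Combo K × Fin r => p.1 = z).card :=
    Finset.card_bij (fun i _ => e i)
      (by intro i hi; simpa using (Finset.mem_filter.mp hi).2)
      (by intro a _ b _ h; exact e.injective h)
      (by intro p hp; exact ⟨e.symm p, by simp_all, by simp⟩)
  have h2 : (Finset.univ.filter fun p : Combo K × Fin r => p.1 = z)
      = {z} ×ˢ (Finset.univ : Finset (Fin r)) := by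
    ext p
    simp only [Finset.mem_product, mem_filter, mem_univ, true_and, Finset.mem_singleton, and_true]
  rw [h1, h2]; simp
lemma Wvar_sum_z {K N : ℕ} (ω : Fin N → Combo K) (i : Fin N) :
    ∑ z : Combo K, Wvar K N ω i z = 1 := by
  simp [Wvar, Finset.sum_ite_eq]

lemma Wvar_select {K N : ℕ} (ω : Fin N → Combo K) (i : Fin N) (F : Combo K → ℝ) :
    ∑ z : Combo K, Wvar K N ω i z * F z = F (ω i) := by
  simp [Wvar, ite_mul, Finset.sum_ite_eq]

lemma Wvar_sum_units {K N r : ℕ} {ω : Fin N → Combo K} (hω : ω ∈ Assignments K N r)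
    (z : Combo K) : ∑ j, Wvar K N ω j z = (r : ℝ) := by
  rw [mem_Assignments] at hω
  have : ∑ j, Wvar K N ω j z = ((Finset.univ.filter (fun j => ω j = z)).card : ℝ) := by
    simp [Wvar]
  rw [this, hω z]

lemma W1_eq {K N r : ℕ} (i : Fin N) (z : Combo K) :
    ∑ ω ∈ Assignments K N r, Wvar K N ω i z = ((Assignments K N r).card : ℝ) / 2 ^ K := by
  have hconst : ∀ z' : Combo K,
      ∑ ω ∈ Assignments K N r, Wvar K N ω i z' = ∑ ω ∈ Assignments K N r, Wvar K N ω i z := by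
    intro z'
    have h := sum_postcomp (r := r) (Equiv.swap z z') (fun ω => Wvar K N ω i z')
    rw [← h]
    refine Finset.sum_congr rfl fun ω _ => ?_
    simp only [Wvar, Function.comp]
    congr 1
    simp [Equiv.apply_eq_iff_eq_symm_apply, Equiv.symm_swap, Equiv.swap_apply_right]
  have hsum : ∑ z' : Combo K, ∑ ω ∈ Assignments K N r, Wvar K N ω i z'
      = ((Assignments K N r).card : ℝ) := by
    rw [Finset.sum_comm]
    rw [Finset.sum_congr rfl (fun ω _ => Wvar_sum_z ω i)]
    simp
  have h2 : ∑ z' : Combo K, ∑ ω ∈ Assignments K N r, Wvar K N ω i z'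
      = (2 ^ K : ℝ) * ∑ ω ∈ Assignments K N r, Wvar K N ω i z := by
    rw [Finset.sum_congr rfl (fun z' _ => hconst z')]
    rw [Finset.sum_const, card_univ, card_Combo]
    push_cast
    ring
  rw [h2] at hsum
  field_simp at hsum ⊢
  linarith [hsum]
lemma W2_j_indep {K N r : ℕ} {i j j' : Fin N} (hj : j ≠ i) (hj' : j' ≠ i) (z z' : Combo K) :
    ∑ ω ∈ Assignments K N r, Wvar K N ω i z * Wvar K N ω j' z'
      = ∑ ω ∈ Assignments K N r, Wvar K N ω i z * Wvar K N ω j z' := by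
  have h := sum_precomp (r := r) (Equiv.swap j j')
    (fun ω => Wvar K N ω i z * Wvar K N ω j z')
  rw [← h]
  refine Finset.sum_congr rfl fun ω _ => ?_
  have h1 : (ω ∘ Equiv.swap j j') i = ω i := by
    simp [Equiv.swap_apply_of_ne_of_ne hj.symm hj'.symm]
  have h2 : (ω ∘ Equiv.swap j j') j = ω j' := by simp
  simp only [Wvar, h1, h2]

lemma W2_z_indep {K N r : ℕ} (i j : Fin N) {z z' z'' : Combo K} (hz' : z' ≠ z) (hz'' : z'' ≠ z) :
    ∑ ω ∈ Assignments K N r, Wvar K N ω i z * Wvar K N ω j z''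
      = ∑ ω ∈ Assignments K N r, Wvar K N ω i z * Wvar K N ω j z' := by
  have h := sum_postcomp (r := r) (Equiv.swap z' z'')
    (fun ω => Wvar K N ω i z * Wvar K N ω j z')
  rw [← h]
  refine Finset.sum_congr rfl fun ω _ => ?_
  have e1 : (Equiv.swap z' z'' (ω i) = z) ↔ (ω i = z) := by
    rw [Equiv.apply_eq_iff_eq_symm_apply, Equiv.symm_swap,
      Equiv.swap_apply_of_ne_of_ne hz'.symm hz''.symm]
  have e2 : (Equiv.swap z' z'' (ω j) = z') ↔ (ω j = z'') := by
    rw [Equiv.apply_eq_iff_eq_symm_apply, Equiv.symm_swap, Equiv.swap_apply_left]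
  simp only [Wvar, Function.comp]
  rw [if_congr e1 rfl rfl, if_congr e2 rfl rfl]

lemma W2_same_eq {K N r : ℕ} (hr : 0 < r) (hN : N = r * 2 ^ K) (hK : 1 ≤ K)
    {i j : Fin N} (hij : j ≠ i) (z : Combo K) :
    ∑ ω ∈ Assignments K N r, Wvar K N ω i z * Wvar K N ω j z
      = ((Assignments K N r).card : ℝ) * ((r : ℝ) - 1) / (2 ^ K * ((N : ℝ) - 1)) := by
  have hN2 : 2 ≤ N := by
    rw [hN]
    calc 2 = 1 * 2 ^ 1 := by norm_num
    _ ≤ r * 2 ^ K := Nat.mul_le_mul hr (Nat.pow_le_pow_right (by norm_num) hK)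
  have hNR : (0 : ℝ) < (N : ℝ) - 1 := by
    have : (2 : ℝ) ≤ (N : ℝ) := by exact_mod_cast hN2
    linarith
  have hrow : ∑ j' ∈ Finset.univ.erase i,
      ∑ ω ∈ Assignments K N r, Wvar K N ω i z * Wvar K N ω j' z
      = ((r : ℝ) - 1) * (((Assignments K N r).card : ℝ) / 2 ^ K) := by
    rw [Finset.sum_comm, ← W1_eq (r := r) i z, Finset.mul_sum]
    refine Finset.sum_congr rfl fun ω hω => ?_
    rw [← Finset.mul_sum, Finset.sum_erase_eq_sub (Finset.mem_univ i),
      Wvar_sum_units hω z]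
    simp only [Wvar]
    split <;> ring
  have hconst : ∑ j' ∈ Finset.univ.erase i,
      ∑ ω ∈ Assignments K N r, Wvar K N ω i z * Wvar K N ω j' z
      = ((N : ℝ) - 1) * ∑ ω ∈ Assignments K N r, Wvar K N ω i z * Wvar K N ω j z := by
    rw [Finset.sum_congr rfl (fun j' hj' =>
      W2_j_indep (r := r) hij (Finset.ne_of_mem_erase hj') z z)]
    rw [Finset.sum_const, Finset.card_erase_of_mem (Finset.mem_univ i), card_univ,
      Fintype.card_fin]
    have : ((N - 1 : ℕ) : ℝ) = (N : ℝ) - 1 := by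
      have : 1 ≤ N := le_trans (by norm_num) hN2
      push_cast [this]; ring
    rw [nsmul_eq_mul, this]
  rw [hconst] at hrow
  have h2K : (0 : ℝ) < (2 : ℝ) ^ K := by positivity
  field_simp at hrow ⊢
  nlinarith [hrow]

lemma W2_diff_eq {K N r : ℕ} (hr : 0 < r) (hN : N = r * 2 ^ K) (hK : 1 ≤ K)
    {i j : Fin N} (hij : j ≠ i) {z z' : Combo K} (hz : z' ≠ z) :
    ∑ ω ∈ Assignments K N r, Wvar K N ω i z * Wvar K N ω j z'
      = ((Assignments K N r).card : ℝ) * (r : ℝ) / (2 ^ K * ((N : ℝ) - 1)) := by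
  have hN2 : 2 ≤ N := by
    rw [hN]
    calc 2 = 1 * 2 ^ 1 := by norm_num
    _ ≤ r * 2 ^ K := Nat.mul_le_mul hr (Nat.pow_le_pow_right (by norm_num) hK)
  have hNR : (0 : ℝ) < (N : ℝ) - 1 := by
    have : (2 : ℝ) ≤ (N : ℝ) := by exact_mod_cast hN2
    linarith
  have h2K : (0 : ℝ) < (2 : ℝ) ^ K := by positivity
  have hrow : ∑ z'' ∈ Finset.univ.erase z,
      ∑ ω ∈ Assignments K N r, Wvar K N ω i z * Wvar K N ω j z''
      = (((Assignments K N r).card : ℝ) / 2 ^ K)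
        - ((Assignments K N r).card : ℝ) * ((r : ℝ) - 1) / (2 ^ K * ((N : ℝ) - 1)) := by
    rw [Finset.sum_comm, ← W2_same_eq hr hN hK hij z, ← W1_eq (r := r) i z,
      ← Finset.sum_sub_distrib]
    refine Finset.sum_congr rfl fun ω hω => ?_
    have : ∑ z'' ∈ Finset.univ.erase z, Wvar K N ω j z'' = 1 - Wvar K N ω j z := by
      rw [Finset.sum_erase_eq_sub (Finset.mem_univ z), Wvar_sum_z]
    rw [← Finset.mul_sum, this]
    ring
  have hconst : ∑ z'' ∈ Finset.univ.erase z,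
      ∑ ω ∈ Assignments K N r, Wvar K N ω i z * Wvar K N ω j z''
      = ((2 : ℝ) ^ K - 1) * ∑ ω ∈ Assignments K N r, Wvar K N ω i z * Wvar K N ω j z' := by
    rw [Finset.sum_congr rfl (fun z'' hz'' =>
      W2_z_indep (r := r) i j hz (Finset.ne_of_mem_erase hz''))]
    rw [Finset.sum_const, Finset.card_erase_of_mem (Finset.mem_univ z), card_univ,
      card_Combo]
    have h1 : 1 ≤ 2 ^ K := Nat.one_le_two_pow
    have : ((2 ^ K - 1 : ℕ) : ℝ) = (2 : ℝ) ^ K - 1 := by push_cast [h1]; ring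
    rw [nsmul_eq_mul, this]
  rw [hconst] at hrow
  have h2K1 : (1 : ℝ) < (2 : ℝ) ^ K := one_lt_pow₀ (by norm_num) (by omega)
  have hx1 : (0 : ℝ) < (2 : ℝ) ^ K - 1 := by linarith
  have hNrr : (N : ℝ) = (r : ℝ) * 2 ^ K := by exact_mod_cast congrArg (Nat.cast : ℕ → ℝ) hN
  rw [eq_div_iff (ne_of_gt (mul_pos h2K hNR))]
  apply mul_left_cancel₀ (ne_of_gt (mul_pos hx1 h2K))
  field_simp at hrow
  linear_combination (2 : ℝ) ^ K * hrow + (2 : ℝ) ^ K * ((Assignments K N r).card : ℝ) * hNrr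
lemma gA_mul_self {K : ℕ} (A : Finset (Fin K)) (z : Combo K) : gA K A z * gA K A z = 1 := by
  unfold gA
  rw [← Finset.prod_mul_distrib]
  apply Finset.prod_eq_one
  intro k _
  by_cases h : z k <;> simp [h]

lemma gA_sum_zero {K : ℕ} {A : Finset (Fin K)} (hA : A.Nonempty) :
    ∑ z : Combo K, gA K A z = 0 := by
  obtain ⟨k, hk⟩ := hA
  have hinv : Function.Involutive (fun z : Combo K => Function.update z k (!z k)) := by
    intro z
    funext j
    by_cases h : j = k <;> simp [Function.update, h]
  have hflip : ∀ z : Combo K, gA K A (Function.update z k (!z k)) = - gA K A z := by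
    intro z
    unfold gA
    rw [← Finset.mul_prod_erase A _ hk, ← Finset.mul_prod_erase A _ hk]
    have h1 : (Finset.univ.val : Multiset (Fin K)) = Finset.univ.val := rfl
    have h2 : ∏ j ∈ A.erase k, (if Function.update z k (!z k) j then (1:ℝ) else -1)
        = ∏ j ∈ A.erase k, (if z j then (1:ℝ) else -1) := by
      apply Finset.prod_congr rfl
      intro j hj
      rw [Function.update_of_ne (Finset.ne_of_mem_erase hj)]
    rw [h2, Function.update_self]
    by_cases h : z k <;> simp [h]
  have h2 : ∑ z : Combo K, gA K A (Function.update z k (!z k)) = ∑ z : Combo K, gA K A z :=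
    Fintype.sum_bijective _ hinv.bijective _ _ (fun z => rfl)
  rw [Finset.sum_congr rfl (fun z _ => hflip z), Finset.sum_neg_distrib] at h2
  linarith

lemma sum_Y_eq {K N : ℕ} (hN : N ≠ 0) (Y : Fin N → Combo K → ℝ) (z : Combo K) :
    ∑ i, Y i z = (N : ℝ) * Ybar K N Y z := by
  unfold Ybar
  have : (N : ℝ) ≠ 0 := Nat.cast_ne_zero.mpr hN
  field_simp

lemma sum_sq_Y {K N : ℕ} (hN2 : 2 ≤ N) {Y : Fin N → Combo K → ℝ} {S2 : ℝ}
    (z : Combo K) (h : Ssq K N Y z = S2) :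
    ∑ i, (Y i z) ^ 2 = ((N : ℝ) - 1) * S2 + (N : ℝ) * (Ybar K N Y z) ^ 2 := by
  have hNR : (N : ℝ) - 1 ≠ 0 := by
    have : (2 : ℝ) ≤ (N : ℝ) := by exact_mod_cast hN2
    linarith
  unfold Ssq at h
  rw [div_eq_iff hNR] at h
  have hY := sum_Y_eq (K := K) (by omega) Y z
  have h1 : ∑ i, (Y i z - Ybar K N Y z) ^ 2
      = ∑ i, (Y i z) ^ 2 - 2 * Ybar K N Y z * (∑ i, Y i z) + (N : ℝ) * (Ybar K N Y z) ^ 2 := by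
    rw [Finset.sum_congr rfl (fun i _ => show (Y i z - Ybar K N Y z) ^ 2
      = (Y i z) ^ 2 - 2 * Ybar K N Y z * Y i z + (Ybar K N Y z) ^ 2 by ring)]
    rw [Finset.sum_add_distrib, Finset.sum_sub_distrib, ← Finset.mul_sum,
      Finset.sum_const, card_univ, Fintype.card_fin, nsmul_eq_mul]
  rw [h1] at h
  linear_combination h + 2 * Ybar K N Y z * hY

lemma sum_mul_Y {K N : ℕ} (hN2 : 2 ≤ N) {Y : Fin N → Combo K → ℝ} {S2 ρ : ℝ}
    {z z' : Combo K} (hzz : z ≠ z') (h : Scov K N Y z z' = ρ * S2) :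
    ∑ i, Y i z * Y i z'
      = ((N : ℝ) - 1) * (ρ * S2) + (N : ℝ) * (Ybar K N Y z * Ybar K N Y z') := by
  have hNR : (N : ℝ) - 1 ≠ 0 := by
    have : (2 : ℝ) ≤ (N : ℝ) := by exact_mod_cast hN2
    linarith
  unfold Scov at h
  rw [div_eq_iff hNR] at h
  have hY := sum_Y_eq (K := K) (by omega) Y z
  have hY' := sum_Y_eq (K := K) (by omega) Y z'
  have h1 : ∑ i, (Y i z - Ybar K N Y z) * (Y i z' - Ybar K N Y z')
      = ∑ i, Y i z * Y i z' - Ybar K N Y z' * (∑ i, Y i z)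
        - Ybar K N Y z * (∑ i, Y i z') + (N : ℝ) * (Ybar K N Y z * Ybar K N Y z') := by
    rw [Finset.sum_congr rfl (fun i _ => show (Y i z - Ybar K N Y z) * (Y i z' - Ybar K N Y z')
      = Y i z * Y i z' - Ybar K N Y z' * Y i z - Ybar K N Y z * Y i z'
        + Ybar K N Y z * Ybar K N Y z' by ring)]
    rw [Finset.sum_add_distrib, Finset.sum_sub_distrib, Finset.sum_sub_distrib,
      ← Finset.mul_sum, ← Finset.mul_sum, Finset.sum_const, card_univ,
      Fintype.card_fin, nsmul_eq_mul]
  rw [h1] at h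
  linear_combination h + Ybar K N Y z' * hY + Ybar K N Y z * hY'
lemma tauHat_eq {K N r : ℕ} (Y : Fin N → Combo K → ℝ) (A : Finset (Fin K))
    (ω : Fin N → Combo K) :
    tauHat K N r Y A ω = (∑ i, gA K A (ω i) * Y i (ω i)) / ((r : ℝ) * 2 ^ (K - 1)) := by
  unfold tauHat YbarObs
  have h1 : ∀ z : Combo K, gA K A z * ((∑ i, if ω i = z then Y i z else 0) / (r : ℝ))
      = (∑ i, if ω i = z then gA K A z * Y i z else 0) / (r : ℝ) := by
    intro z
    rw [← mul_div_assoc, Finset.mul_sum]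
    congr 1
    exact Finset.sum_congr rfl fun i _ => by rw [mul_ite, mul_zero]
  rw [Finset.sum_congr rfl (fun z _ => h1 z), ← Finset.sum_div, Finset.sum_comm, div_div]
  congr 1
  refine Finset.sum_congr rfl fun i _ => ?_
  simp [Finset.sum_ite_eq]

lemma variance_eq {K N r : ℕ} (hM : ((Assignments K N r).card : ℝ) ≠ 0)
    (f : (Fin N → Combo K) → ℝ) :
    variance K N r f = (∑ ω ∈ Assignments K N r, f ω ^ 2) / ((Assignments K N r).card : ℝ)
      - ((∑ ω ∈ Assignments K N r, f ω) / ((Assignments K N r).card : ℝ)) ^ 2 := by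
  unfold variance _root_.expect
  set M := ((Assignments K N r).card : ℝ) with hMdef
  set μ := (∑ ω ∈ Assignments K N r, f ω) / M with hμdef
  have hsum : ∑ ω ∈ Assignments K N r, f ω = M * μ := by rw [hμdef]; field_simp
  have expand : ∑ ω ∈ Assignments K N r, (f ω - μ) ^ 2
      = ∑ ω ∈ Assignments K N r, f ω ^ 2 - 2 * μ * (M * μ) + M * μ ^ 2 := by
    rw [Finset.sum_congr rfl (fun ω _ =>
        show (f ω - μ) ^ 2 = f ω ^ 2 - 2 * μ * f ω + μ ^ 2 by ring),
      Finset.sum_add_distrib, Finset.sum_sub_distrib, ← Finset.mul_sum, hsum,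
      Finset.sum_const, nsmul_eq_mul, ← hMdef]
  rw [expand]
  field_simp
  ring

lemma W2_ii_eq {K N r : ℕ} (i : Fin N) (z z' : Combo K) :
    ∑ ω ∈ Assignments K N r, Wvar K N ω i z * Wvar K N ω i z'
      = if z = z' then ((Assignments K N r).card : ℝ) / 2 ^ K else 0 := by
  by_cases h : z = z'
  · subst h
    rw [if_pos rfl, ← W1_eq (r := r) i z]
    refine Finset.sum_congr rfl fun ω _ => ?_
    simp only [Wvar]
    split <;> norm_num
  · rw [if_neg h]
    apply Finset.sum_eq_zero
    intro ω _
    simp only [Wvar]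
    split_ifs with h1 h2
    · exact absurd (h1 ▸ h2) h
    · ring
    · ring
    · ring
lemma keyii {K N r : ℕ} (Y : Fin N → Combo K → ℝ) (A : Finset (Fin K)) (i : Fin N) :
    ∑ ω ∈ Assignments K N r, (gA K A (ω i) * Y i (ω i)) * (gA K A (ω i) * Y i (ω i))
      = ((Assignments K N r).card : ℝ) / 2 ^ K * ∑ z, (gA K A z * Y i z) ^ 2 := by
  calc ∑ ω ∈ Assignments K N r, (gA K A (ω i) * Y i (ω i)) * (gA K A (ω i) * Y i (ω i))
      = ∑ ω ∈ Assignments K N r, ∑ z, ∑ z',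
          (Wvar K N ω i z * Wvar K N ω i z') * ((gA K A z * Y i z) * (gA K A z' * Y i z')) := by
        refine Finset.sum_congr rfl fun ω _ => ?_
        rw [← Wvar_select ω i (fun z => gA K A z * Y i z), Finset.sum_mul_sum]
        exact Finset.sum_congr rfl fun z _ => Finset.sum_congr rfl fun z' _ => by ring
    _ = ∑ z, ∑ z', (∑ ω ∈ Assignments K N r, Wvar K N ω i z * Wvar K N ω i z')
          * ((gA K A z * Y i z) * (gA K A z' * Y i z')) := by
        rw [Finset.sum_comm]
        refine Finset.sum_congr rfl fun z _ => ?_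
        rw [Finset.sum_comm]
        exact Finset.sum_congr rfl fun z' _ => by rw [Finset.sum_mul]
    _ = ∑ z, ∑ z', (if z = z' then ((Assignments K N r).card : ℝ) / 2 ^ K else 0)
          * ((gA K A z * Y i z) * (gA K A z' * Y i z')) := by
        exact Finset.sum_congr rfl fun z _ => Finset.sum_congr rfl fun z' _ => by
          rw [W2_ii_eq]
    _ = ((Assignments K N r).card : ℝ) / 2 ^ K * ∑ z, (gA K A z * Y i z) ^ 2 := by
        rw [Finset.mul_sum]
        refine Finset.sum_congr rfl fun z _ => ?_
        rw [Finset.sum_congr rfl (fun z' _ => by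
          rw [ite_mul, zero_mul] :
          ∀ z' ∈ (Finset.univ : Finset (Combo K)), _ = if z = z' then
            ((Assignments K N r).card : ℝ) / 2 ^ K * ((gA K A z * Y i z) * (gA K A z' * Y i z'))
            else 0)]
        rw [Finset.sum_ite_eq]
        simp only [Finset.mem_univ, if_true]
        ring

lemma keyij {K N r : ℕ} (hr : 0 < r) (hN : N = r * 2 ^ K) (hK : 1 ≤ K)
    (Y : Fin N → Combo K → ℝ) (A : Finset (Fin K)) {i j : Fin N} (hij : j ≠ i) :
    ∑ ω ∈ Assignments K N r, (gA K A (ω i) * Y i (ω i)) * (gA K A (ω j) * Y j (ω j))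
      = ((Assignments K N r).card : ℝ) * (r : ℝ) / (2 ^ K * ((N : ℝ) - 1))
          * ((∑ z, gA K A z * Y i z) * (∑ z, gA K A z * Y j z))
        + (((Assignments K N r).card : ℝ) * ((r : ℝ) - 1) / (2 ^ K * ((N : ℝ) - 1))
            - ((Assignments K N r).card : ℝ) * (r : ℝ) / (2 ^ K * ((N : ℝ) - 1)))
          * ∑ z, (gA K A z * Y i z) * (gA K A z * Y j z) := by
  set aa := ((Assignments K N r).card : ℝ) * ((r : ℝ) - 1) / (2 ^ K * ((N : ℝ) - 1)) with haa
  set bb := ((Assignments K N r).card : ℝ) * (r : ℝ) / (2 ^ K * ((N : ℝ) - 1)) with hbb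
  calc ∑ ω ∈ Assignments K N r, (gA K A (ω i) * Y i (ω i)) * (gA K A (ω j) * Y j (ω j))
      = ∑ ω ∈ Assignments K N r, ∑ z, ∑ z',
          (Wvar K N ω i z * Wvar K N ω j z') * ((gA K A z * Y i z) * (gA K A z' * Y j z')) := by
        refine Finset.sum_congr rfl fun ω _ => ?_
        rw [← Wvar_select ω i (fun z => gA K A z * Y i z),
          ← Wvar_select ω j (fun z => gA K A z * Y j z), Finset.sum_mul_sum]
        exact Finset.sum_congr rfl fun z _ => Finset.sum_congr rfl fun z' _ => by ring
    _ = ∑ z, ∑ z', (∑ ω ∈ Assignments K N r, Wvar K N ω i z * Wvar K N ω j z')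
          * ((gA K A z * Y i z) * (gA K A z' * Y j z')) := by
        rw [Finset.sum_comm]
        refine Finset.sum_congr rfl fun z _ => ?_
        rw [Finset.sum_comm]
        exact Finset.sum_congr rfl fun z' _ => by rw [Finset.sum_mul]
    _ = ∑ z, ∑ z', (if z = z' then aa else bb)
          * ((gA K A z * Y i z) * (gA K A z' * Y j z')) := by
        refine Finset.sum_congr rfl fun z _ => Finset.sum_congr rfl fun z' _ => ?_
        by_cases h : z = z'
        · subst h
          rw [if_pos rfl, W2_same_eq hr hN hK hij z]
        · rw [if_neg h, W2_diff_eq hr hN hK hij (fun hc => h hc.symm)]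
    _ = ∑ z, ∑ z', (bb * ((gA K A z * Y i z) * (gA K A z' * Y j z'))
          + (if z = z' then (aa - bb) * ((gA K A z * Y i z) * (gA K A z' * Y j z')) else 0)) := by
        refine Finset.sum_congr rfl fun z _ => Finset.sum_congr rfl fun z' _ => ?_
        split_ifs <;> ring
    _ = bb * ((∑ z, gA K A z * Y i z) * (∑ z, gA K A z * Y j z))
        + (aa - bb) * ∑ z, (gA K A z * Y i z) * (gA K A z * Y j z) := by
        rw [Finset.sum_congr rfl (fun z (_ : z ∈ Finset.univ) => Finset.sum_add_distrib)]
        rw [Finset.sum_add_distrib]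
        congr 1
        · rw [Finset.sum_mul_sum, Finset.mul_sum]
          exact Finset.sum_congr rfl fun z _ => by rw [Finset.mul_sum]
        · rw [Finset.mul_sum]
          refine Finset.sum_congr rfl fun z _ => ?_
          rw [Finset.sum_ite_eq]
          simp only [Finset.mem_univ, if_true]
lemma sum1_eq {K N r : ℕ} (Y : Fin N → Combo K → ℝ) (A : Finset (Fin K)) :
    ∑ ω ∈ Assignments K N r, ∑ i, gA K A (ω i) * Y i (ω i)
      = ((Assignments K N r).card : ℝ) / 2 ^ K * ∑ i, ∑ z, gA K A z * Y i z := by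
  rw [Finset.sum_comm, Finset.mul_sum]
  refine Finset.sum_congr rfl fun i _ => ?_
  calc ∑ ω ∈ Assignments K N r, gA K A (ω i) * Y i (ω i)
      = ∑ ω ∈ Assignments K N r, ∑ z, Wvar K N ω i z * (gA K A z * Y i z) :=
        Finset.sum_congr rfl fun ω _ =>
          (Wvar_select ω i (fun z => gA K A z * Y i z)).symm
    _ = ∑ z, (∑ ω ∈ Assignments K N r, Wvar K N ω i z) * (gA K A z * Y i z) := by
        rw [Finset.sum_comm]
        exact Finset.sum_congr rfl fun z _ => by rw [Finset.sum_mul]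
    _ = ((Assignments K N r).card : ℝ) / 2 ^ K * ∑ z, gA K A z * Y i z := by
        rw [Finset.mul_sum]
        exact Finset.sum_congr rfl fun z _ => by rw [W1_eq]

lemma sum2_eq {K N r : ℕ} (hr : 0 < r) (hN : N = r * 2 ^ K) (hK : 1 ≤ K)
    (Y : Fin N → Combo K → ℝ) (A : Finset (Fin K)) :
    ∑ ω ∈ Assignments K N r, (∑ i, gA K A (ω i) * Y i (ω i)) ^ 2
      = ((Assignments K N r).card : ℝ) / 2 ^ K * (∑ i, ∑ z, (gA K A z * Y i z) ^ 2)
        + ((Assignments K N r).card : ℝ) * (r : ℝ) / (2 ^ K * ((N : ℝ) - 1))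
          * ((∑ i, ∑ z, gA K A z * Y i z) * (∑ i, ∑ z, gA K A z * Y i z)
              - ∑ i, (∑ z, gA K A z * Y i z) ^ 2)
        + (((Assignments K N r).card : ℝ) * ((r : ℝ) - 1) / (2 ^ K * ((N : ℝ) - 1))
            - ((Assignments K N r).card : ℝ) * (r : ℝ) / (2 ^ K * ((N : ℝ) - 1)))
          * (∑ z, (∑ i, gA K A z * Y i z) ^ 2 - ∑ i, ∑ z, (gA K A z * Y i z) ^ 2) := by
  set aa := ((Assignments K N r).card : ℝ) * ((r : ℝ) - 1) / (2 ^ K * ((N : ℝ) - 1)) with haa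
  set bb := ((Assignments K N r).card : ℝ) * (r : ℝ) / (2 ^ K * ((N : ℝ) - 1)) with hbb
  set cc := ((Assignments K N r).card : ℝ) / 2 ^ K with hcc
  have step1 : ∑ ω ∈ Assignments K N r, (∑ i, gA K A (ω i) * Y i (ω i)) ^ 2
      = ∑ i, ∑ j, ∑ ω ∈ Assignments K N r,
          (gA K A (ω i) * Y i (ω i)) * (gA K A (ω j) * Y j (ω j)) := by
    rw [Finset.sum_congr rfl (fun ω (_ : ω ∈ Assignments K N r) => show
      (∑ i, gA K A (ω i) * Y i (ω i)) ^ 2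
        = ∑ i, ∑ j, (gA K A (ω i) * Y i (ω i)) * (gA K A (ω j) * Y j (ω j)) by
      rw [sq, Finset.sum_mul_sum])]
    rw [Finset.sum_comm]
    exact Finset.sum_congr rfl fun i _ => Finset.sum_comm
  rw [step1]
  have step2 : ∀ i : Fin N, ∑ j, ∑ ω ∈ Assignments K N r,
        (gA K A (ω i) * Y i (ω i)) * (gA K A (ω j) * Y j (ω j))
      = cc * ∑ z, (gA K A z * Y i z) ^ 2
        + bb * ((∑ z, gA K A z * Y i z)
            * ((∑ j, ∑ z, gA K A z * Y j z) - ∑ z, gA K A z * Y i z))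
        + (aa - bb) * (∑ z, (gA K A z * Y i z)
            * ((∑ j, gA K A z * Y j z) - gA K A z * Y i z)) := by
    intro i
    rw [← Finset.add_sum_erase _ _ (Finset.mem_univ i)]
    rw [keyii Y A i, ← hcc]
    have herase : ∑ j ∈ Finset.univ.erase i, ∑ ω ∈ Assignments K N r,
          (gA K A (ω i) * Y i (ω i)) * (gA K A (ω j) * Y j (ω j))
        = bb * ((∑ z, gA K A z * Y i z)
            * ((∑ j, ∑ z, gA K A z * Y j z) - ∑ z, gA K A z * Y i z))
          + (aa - bb) * (∑ z, (gA K A z * Y i z)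
              * ((∑ j, gA K A z * Y j z) - gA K A z * Y i z)) := by
      rw [Finset.sum_congr rfl (fun j hj =>
        (keyij hr hN hK Y A (Finset.ne_of_mem_erase hj)).trans (by rw [← haa, ← hbb]))]
      rw [Finset.sum_add_distrib]
      congr 1
      · rw [← Finset.mul_sum]
        congr 1
        rw [← Finset.mul_sum, Finset.sum_erase_eq_sub (Finset.mem_univ i)]
      · rw [← Finset.mul_sum]
        congr 1
        rw [Finset.sum_comm]
        refine Finset.sum_congr rfl fun z _ => ?_
        rw [← Finset.mul_sum, Finset.sum_erase_eq_sub (Finset.mem_univ i)]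
    rw [herase]
    ring
  have hA1 : ∑ i, cc * (∑ z, (gA K A z * Y i z) ^ 2)
      = cc * (∑ i, ∑ z, (gA K A z * Y i z) ^ 2) := (Finset.mul_sum _ _ _).symm
  have hA2 : ∑ i, bb * ((∑ z, gA K A z * Y i z)
        * ((∑ j, ∑ z, gA K A z * Y j z) - ∑ z, gA K A z * Y i z))
      = bb * ((∑ i, ∑ z, gA K A z * Y i z) * (∑ i, ∑ z, gA K A z * Y i z)
          - ∑ i, (∑ z, gA K A z * Y i z) ^ 2) := by
    rw [← Finset.mul_sum]
    congr 1
    rw [Finset.sum_congr rfl (fun i (_ : i ∈ Finset.univ) => show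
      (∑ z, gA K A z * Y i z) * ((∑ j, ∑ z, gA K A z * Y j z) - ∑ z, gA K A z * Y i z)
        = (∑ z, gA K A z * Y i z) * (∑ j, ∑ z, gA K A z * Y j z)
          - (∑ z, gA K A z * Y i z) ^ 2 by ring)]
    rw [Finset.sum_sub_distrib, ← Finset.sum_mul]
  have hA3 : ∑ i, (aa - bb) * (∑ z, (gA K A z * Y i z)
        * ((∑ j, gA K A z * Y j z) - gA K A z * Y i z))
      = (aa - bb) * (∑ z, (∑ i, gA K A z * Y i z) ^ 2
          - ∑ i, ∑ z, (gA K A z * Y i z) ^ 2) := by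
    rw [← Finset.mul_sum]
    congr 1
    calc ∑ i, ∑ z, (gA K A z * Y i z) * ((∑ j, gA K A z * Y j z) - gA K A z * Y i z)
        = ∑ z, ∑ i, ((gA K A z * Y i z) * (∑ j, gA K A z * Y j z)
            - (gA K A z * Y i z) ^ 2) := by
          rw [Finset.sum_comm]
          exact Finset.sum_congr rfl fun z _ => Finset.sum_congr rfl fun i _ => by ring
      _ = ∑ z, ((∑ i, gA K A z * Y i z) ^ 2 - ∑ i, (gA K A z * Y i z) ^ 2) := by
          refine Finset.sum_congr rfl fun z _ => ?_
          rw [Finset.sum_sub_distrib, ← Finset.sum_mul, sq]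
      _ = ∑ z, (∑ i, gA K A z * Y i z) ^ 2 - ∑ i, ∑ z, (gA K A z * Y i z) ^ 2 := by
          rw [Finset.sum_sub_distrib]
          congr 1
          exact Finset.sum_comm
  rw [Finset.sum_congr rfl fun i _ => step2 i, Finset.sum_add_distrib,
    Finset.sum_add_distrib, hA1, hA2, hA3]
lemma gA_sq {K : ℕ} (A : Finset (Fin K)) (z : Combo K) : gA K A z ^ 2 = 1 := by
  rw [sq]; exact gA_mul_self A z

lemma P_eq {K N : ℕ} (hN2 : 2 ≤ N) {Y : Fin N → Combo K → ℝ} {S2 : ℝ}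
    (hS : ∀ z : Combo K, Ssq K N Y z = S2) (A : Finset (Fin K)) :
    ∑ i, ∑ z, (gA K A z * Y i z) ^ 2
      = 2 ^ K * ((N : ℝ) - 1) * S2 + (N : ℝ) * ∑ z, (Ybar K N Y z) ^ 2 := by
  rw [Finset.sum_comm]
  have hz : ∀ z : Combo K, ∑ i, (gA K A z * Y i z) ^ 2
      = ((N : ℝ) - 1) * S2 + (N : ℝ) * (Ybar K N Y z) ^ 2 := by
    intro z
    rw [Finset.sum_congr rfl (fun i (_ : i ∈ Finset.univ) => show
      (gA K A z * Y i z) ^ 2 = (Y i z) ^ 2 by rw [mul_pow, gA_sq, one_mul])]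
    exact sum_sq_Y hN2 z (hS z)
  rw [Finset.sum_congr rfl fun z _ => hz z, Finset.sum_add_distrib, Finset.sum_const,
    ← Finset.mul_sum, card_univ, card_Combo, nsmul_eq_mul]
  push_cast
  ring

lemma CC_eq {K N : ℕ} (hN0 : N ≠ 0) (Y : Fin N → Combo K → ℝ) (A : Finset (Fin K)) :
    ∑ z, (∑ i, gA K A z * Y i z) ^ 2 = (N : ℝ) ^ 2 * ∑ z, (Ybar K N Y z) ^ 2 := by
  rw [Finset.mul_sum]
  refine Finset.sum_congr rfl fun z _ => ?_
  rw [← Finset.mul_sum, sum_Y_eq hN0 Y z, mul_pow, gA_sq, one_mul]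
  ring

lemma G_eq {K N : ℕ} (hN0 : N ≠ 0) (Y : Fin N → Combo K → ℝ) (A : Finset (Fin K)) :
    ∑ i, ∑ z, gA K A z * Y i z = (N : ℝ) * ∑ z, gA K A z * Ybar K N Y z := by
  rw [Finset.sum_comm, Finset.mul_sum]
  refine Finset.sum_congr rfl fun z _ => ?_
  rw [← Finset.mul_sum, sum_Y_eq hN0 Y z]
  ring

lemma Q_eq {K N : ℕ} (hN2 : 2 ≤ N) {Y : Fin N → Combo K → ℝ} {S2 ρ : ℝ}
    (hS : ∀ z : Combo K, Ssq K N Y z = S2)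
    (hC : ∀ z zs : Combo K, z ≠ zs → Scov K N Y z zs = ρ * S2)
    {A : Finset (Fin K)} (hA : A.Nonempty) :
    ∑ i, (∑ z, gA K A z * Y i z) ^ 2
      = (N : ℝ) * (∑ z, gA K A z * Ybar K N Y z) ^ 2
        + 2 ^ K * ((N : ℝ) - 1) * S2 * (1 - ρ) := by
  have hT : ∀ z z' : Combo K, ∑ i, Y i z * Y i z'
      = ((N : ℝ) - 1) * (ρ * S2) + (N : ℝ) * (Ybar K N Y z * Ybar K N Y z')
        + (if z' = z then ((N : ℝ) - 1) * S2 * (1 - ρ) else 0) := by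
    intro z z'
    by_cases h : z' = z
    · subst h
      rw [if_pos rfl]
      rw [Finset.sum_congr rfl (fun i (_ : i ∈ Finset.univ) =>
        show Y i z' * Y i z' = (Y i z') ^ 2 from (sq _).symm)]
      rw [sum_sq_Y hN2 z' (hS z')]
      ring
    · rw [if_neg h, add_zero]
      exact sum_mul_Y hN2 (fun hc => h hc.symm) (hC z z' (fun hc => h hc.symm))
  calc ∑ i, (∑ z, gA K A z * Y i z) ^ 2
      = ∑ i, ∑ z, ∑ z', (gA K A z * Y i z) * (gA K A z' * Y i z') := by
        refine Finset.sum_congr rfl fun i _ => ?_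
        rw [sq, Finset.sum_mul_sum]
    _ = ∑ z, ∑ z', (gA K A z * gA K A z') * ∑ i, Y i z * Y i z' := by
        rw [Finset.sum_comm]
        refine Finset.sum_congr rfl fun z _ => ?_
        rw [Finset.sum_comm]
        refine Finset.sum_congr rfl fun z' _ => ?_
        rw [Finset.mul_sum]
        exact Finset.sum_congr rfl fun i _ => by ring
    _ = ∑ z, ∑ z', ((gA K A z * ((N : ℝ) - 1) * (ρ * S2)) * gA K A z'
          + (N : ℝ) * ((gA K A z * Ybar K N Y z) * (gA K A z' * Ybar K N Y z'))
          + (if z' = z then (gA K A z * gA K A z') * (((N : ℝ) - 1) * S2 * (1 - ρ))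
              else 0)) := by
        refine Finset.sum_congr rfl fun z _ => Finset.sum_congr rfl fun z' _ => ?_
        rw [hT z z']
        split_ifs <;> ring
    _ = (N : ℝ) * (∑ z, gA K A z * Ybar K N Y z) ^ 2
        + 2 ^ K * ((N : ℝ) - 1) * S2 * (1 - ρ) := by
        have hz : ∀ z : Combo K, ∑ z', ((gA K A z * ((N : ℝ) - 1) * (ρ * S2)) * gA K A z'
            + (N : ℝ) * ((gA K A z * Ybar K N Y z) * (gA K A z' * Ybar K N Y z'))
            + (if z' = z then (gA K A z * gA K A z') * (((N : ℝ) - 1) * S2 * (1 - ρ))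
                else 0))
            = (N : ℝ) * ((gA K A z * Ybar K N Y z) * ∑ z', gA K A z' * Ybar K N Y z')
              + ((N : ℝ) - 1) * S2 * (1 - ρ) := by
          intro z
          rw [Finset.sum_add_distrib, Finset.sum_add_distrib]
          have t1 : ∑ z', (gA K A z * ((N : ℝ) - 1) * (ρ * S2)) * gA K A z' = 0 := by
            rw [← Finset.mul_sum, gA_sum_zero hA, mul_zero]
          have t2 : (N : ℝ) * ((gA K A z * Ybar K N Y z) * ∑ z', gA K A z' * Ybar K N Y z')
              = ∑ z', (N : ℝ) * ((gA K A z * Ybar K N Y z)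
                  * (gA K A z' * Ybar K N Y z')) := by
            rw [Finset.mul_sum, Finset.mul_sum]
          have t3 : ∑ z', (if z' = z then (gA K A z * gA K A z')
                * (((N : ℝ) - 1) * S2 * (1 - ρ)) else 0)
              = ((N : ℝ) - 1) * S2 * (1 - ρ) := by
            rw [Finset.sum_ite_eq']
            simp [gA_mul_self]
          rw [t1, ← t2, t3, zero_add]
        rw [Finset.sum_congr rfl fun z _ => hz z, Finset.sum_add_distrib, Finset.sum_const,
          card_univ, card_Combo, nsmul_eq_mul]
        have huu : ∑ z, (N : ℝ) * ((gA K A z * Ybar K N Y z)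
              * ∑ z', gA K A z' * Ybar K N Y z')
            = (N : ℝ) * (∑ z, gA K A z * Ybar K N Y z) ^ 2 := by
          rw [Finset.sum_congr rfl (fun z (_ : z ∈ Finset.univ) => show
            (N : ℝ) * ((gA K A z * Ybar K N Y z) * ∑ z', gA K A z' * Ybar K N Y z')
              = ((N : ℝ) * ∑ z', gA K A z' * Ybar K N Y z') * (gA K A z * Ybar K N Y z)
            by ring)]
          rw [← Finset.mul_sum]
          ring
        rw [huu]
        push_cast
        ring
lemma variance_tauHat_eq {K N r : ℕ} (hK : 1 ≤ K) (hr : 0 < r) (hN : N = r * 2 ^ K)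
    (Y : Fin N → Combo K → ℝ) (S2 ρ : ℝ) (hcs : CompoundSymmetry K N Y S2 ρ)
    (A : Finset (Fin K)) (hA : A.Nonempty) :
    variance K N r (tauHat K N r Y A)
      = 4 / (N : ℝ) * S2 * (1 - (1 - ρ) / 2 ^ K) := by
  obtain ⟨hS2pos, hS, hC⟩ := hcs
  have hN2 : 2 ≤ N := by
    rw [hN]
    calc 2 = 1 * 2 ^ 1 := by norm_num
    _ ≤ r * 2 ^ K := Nat.mul_le_mul hr (Nat.pow_le_pow_right (by norm_num) hK)
  have hN0 : N ≠ 0 := by omega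
  have hMpos : 0 < (Assignments K N r).card :=
    Finset.card_pos.mpr (Assignments_nonempty hN)
  have hM0 : ((Assignments K N r).card : ℝ) ≠ 0 := by positivity
  have hf : ∀ ω, tauHat K N r Y A ω
      = (∑ i, gA K A (ω i) * Y i (ω i)) / ((r : ℝ) * 2 ^ (K - 1)) := tauHat_eq Y A
  rw [variance_eq hM0]
  have h1 : ∑ ω ∈ Assignments K N r, tauHat K N r Y A ω
      = (((Assignments K N r).card : ℝ) / 2 ^ K
          * ((N : ℝ) * ∑ z, gA K A z * Ybar K N Y z)) / ((r : ℝ) * 2 ^ (K - 1)) := by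
    rw [Finset.sum_congr rfl fun ω _ => hf ω, ← Finset.sum_div, sum1_eq, G_eq hN0]
  have h2 : ∑ ω ∈ Assignments K N r, tauHat K N r Y A ω ^ 2
      = (((Assignments K N r).card : ℝ) / 2 ^ K
            * (2 ^ K * ((N : ℝ) - 1) * S2 + (N : ℝ) * ∑ z, (Ybar K N Y z) ^ 2)
          + ((Assignments K N r).card : ℝ) * (r : ℝ) / (2 ^ K * ((N : ℝ) - 1))
            * (((N : ℝ) * ∑ z, gA K A z * Ybar K N Y z)
                * ((N : ℝ) * ∑ z, gA K A z * Ybar K N Y z)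
              - ((N : ℝ) * (∑ z, gA K A z * Ybar K N Y z) ^ 2
                  + 2 ^ K * ((N : ℝ) - 1) * S2 * (1 - ρ)))
          + (((Assignments K N r).card : ℝ) * ((r : ℝ) - 1) / (2 ^ K * ((N : ℝ) - 1))
              - ((Assignments K N r).card : ℝ) * (r : ℝ) / (2 ^ K * ((N : ℝ) - 1)))
            * ((N : ℝ) ^ 2 * ∑ z, (Ybar K N Y z) ^ 2
              - (2 ^ K * ((N : ℝ) - 1) * S2 + (N : ℝ) * ∑ z, (Ybar K N Y z) ^ 2)))
        / ((r : ℝ) * 2 ^ (K - 1)) ^ 2 := by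
    rw [Finset.sum_congr rfl fun ω _ => by rw [hf ω, div_pow], ← Finset.sum_div,
      sum2_eq hr hN hK, P_eq hN2 hS, Q_eq hN2 hS hC hA, CC_eq hN0, G_eq hN0]
  rw [h1, h2]
  have hNrr : (N : ℝ) = (r : ℝ) * 2 ^ K := by exact_mod_cast congrArg (Nat.cast : ℕ → ℝ) hN
  have hxy : (2 : ℝ) ^ K = 2 ^ (K - 1) * 2 := by
    rw [← pow_succ, Nat.sub_add_cancel hK]
  have hN1 : ((N : ℝ) - 1) ≠ 0 := by
    have : (2 : ℝ) ≤ (N : ℝ) := by exact_mod_cast hN2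
    linarith
  have hN1' : ((r : ℝ) * (2 ^ (K - 1) * 2) - 1) ≠ 0 := by
    rw [← hxy, ← hNrr]; exact hN1
  have hr0 : (r : ℝ) ≠ 0 := by positivity
  have hy0 : (2 : ℝ) ^ (K - 1) ≠ 0 := by positivity
  rw [hNrr, hxy]
  have hN1'' : (2 : ℝ) ^ (K - 1) * 2 * r - 1 ≠ 0 := by
    intro h; apply hN1'; linarith
  field_simp
  ring
/-- Corollary 3. Under compound symmetry with
−1/(2^K − 1) < ρ ≤ 1, (4/N)(1 − 1/(2^K−1)) S² < Var(τ̂_A) ≤ (4/N) S². -/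
theorem tauHat_variance_bounds (K N r : ℕ) (hK : 1 ≤ K) (hr : 0 < r)
    (hN : N = r * 2 ^ K) (Y : Fin N → Combo K → ℝ) (S2 ρ : ℝ)
    (hcs : CompoundSymmetry K N Y S2 ρ)
    (hρl : -(1 / ((2 : ℝ) ^ K - 1)) < ρ) (hρu : ρ ≤ 1)
    (A : Finset (Fin K)) (hA : A.Nonempty) :
    (4 / (N : ℝ)) * (1 - 1 / ((2 : ℝ) ^ K - 1)) * S2 <
        variance K N r (tauHat K N r Y A) ∧
      variance K N r (tauHat K N r Y A) ≤ (4 / (N : ℝ)) * S2 := by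
  have hS2pos : 0 < S2 := hcs.1
  rw [variance_tauHat_eq hK hr hN Y S2 ρ hcs A hA]
  have hx : (2 : ℝ) ≤ 2 ^ K := by
    calc (2 : ℝ) = 2 ^ 1 := by norm_num
    _ ≤ 2 ^ K := pow_le_pow_right₀ (by norm_num) hK
  have hxm1 : (0 : ℝ) < 2 ^ K - 1 := by linarith
  have hxpos : (0 : ℝ) < 2 ^ K := by linarith
  have hNpos : (0 : ℝ) < (N : ℝ) := by
    have : 0 < N := by
      rw [hN]; exact Nat.mul_pos hr (Nat.pow_pos (by norm_num))
    exact_mod_cast this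
  have hcoef : (0 : ℝ) < 4 / (N : ℝ) * S2 := by positivity
  constructor
  · have key : 1 - 1 / ((2 : ℝ) ^ K - 1) < 1 - (1 - ρ) / 2 ^ K := by
      have h1 : (1 - ρ) / 2 ^ K < 1 / ((2 : ℝ) ^ K - 1) := by
        rw [div_lt_div_iff₀ hxpos hxm1]
        have h2 : -(1 / ((2 : ℝ) ^ K - 1)) * ((2 : ℝ) ^ K - 1) = -1 := by
          field_simp
        have h3 := mul_lt_mul_of_pos_right hρl hxm1
        rw [h2] at h3
        nlinarith
      linarith
    have e : 4 / (N : ℝ) * (1 - 1 / ((2 : ℝ) ^ K - 1)) * S2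
        = 4 / (N : ℝ) * S2 * (1 - 1 / ((2 : ℝ) ^ K - 1)) := by ring
    rw [e]
    exact mul_lt_mul_of_pos_left key hcoef
  · have key : 1 - (1 - ρ) / 2 ^ K ≤ 1 := by
      have : 0 ≤ (1 - ρ) / 2 ^ K := div_nonneg (by linarith) (le_of_lt hxpos)
      linarith
    calc 4 / (N : ℝ) * S2 * (1 - (1 - ρ) / 2 ^ K)
        ≤ 4 / (N : ℝ) * S2 * 1 := mul_le_mul_of_nonneg_left key (le_of_lt hcoef)
      _ = 4 / (N : ℝ) * S2 := by ring
end
end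

section
/- Under strict additivity, for any two distinct nonempty subsets A ≠ B of {1,…,K}, the estimated factorial effects are uncorrelated under a completely randomized assignment: Cov(τ̂_A, τ̂_B) = 0. -/
open Finset

noncomputable section

/-- Auxiliary: gA of a pointwise xor. -/
lemma gA_xor_aux (K : ℕ) (A : Finset (Fin K)) (z t : Combo K) :
    gA K A (fun k => (z k == t k)) = gA K A z * gA K A t := by
  unfold gA
  rw [← Finset.prod_mul_distrib]
  apply Finset.prod_congr rfl
  intro k _
  have h : ∀ a b : Bool, (if ((a == b) : Bool) then (1:ℝ) else -1)
      = (if a then (1:ℝ) else -1) * (if b then (1:ℝ) else -1) := by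
    intro a b
    cases a <;> cases b <;> norm_num
  exact h (z k) (t k)

/-- Auxiliary: existence of a sign-flipping translation. -/
lemma exists_flip_aux (K : ℕ) (A B : Finset (Fin K)) (hAB : A ≠ B) :
    ∃ t : Combo K, gA K A t * gA K B t = -1 := by
  classical
  have hk : ∃ k0, (k0 ∈ A ∧ k0 ∉ B) ∨ (k0 ∈ B ∧ k0 ∉ A) := by
    by_contra h
    push_neg at h
    apply hAB
    ext k
    have := h k
    tauto
  obtain ⟨k0, hk⟩ := hk
  refine ⟨fun k => decide (k ≠ k0), ?_⟩
  have hprod : ∀ s : Finset (Fin K),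
      gA K s (fun k => decide (k ≠ k0)) = if k0 ∈ s then -1 else 1 := by
    intro s
    unfold gA
    have : ∀ k ∈ s, (if (decide (k ≠ k0) : Bool) then (1:ℝ) else -1)
        = (if k = k0 then (-1:ℝ) else 1) := by
      intro k _
      by_cases h : k = k0 <;> simp [h]
    rw [Finset.prod_congr rfl this, Finset.prod_ite_eq' s k0 (fun _ => (-1:ℝ))]
  rcases hk with ⟨h1, h2⟩ | ⟨h1, h2⟩ <;> rw [hprod, hprod] <;> simp [h1, h2]

/-- Auxiliary: translating an assignment by xor stays in `Assignments`. -/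
lemma xor_mem_assignments_aux (K N r : ℕ) (t : Combo K) (ω : Fin N → Combo K)
    (hω : ω ∈ Assignments K N r) :
    (fun i => fun k => (ω i k == t k)) ∈ Assignments K N r := by
  simp only [Assignments, Finset.mem_filter, Finset.mem_univ, true_and] at hω ⊢
  intro z
  rw [← hω (fun k => (z k == t k))]
  congr 1
  apply Finset.filter_congr
  intro i _
  have hxor1 : ∀ a b c : Bool, (a == b) = c ↔ a = (c == b) := by decide
  constructor
  · intro h
    funext k
    have hk := congrFun h k
    exact (hxor1 (ω i k) (t k) (z k)).mp hk
  · intro h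
    funext k
    have hk := congrFun h k
    show (ω i k == t k) = z k
    rw [hk]
    revert hk
    cases z k <;> cases t k <;> simp

/-- Auxiliary master lemma: the sum over assignments of a product of two
contrasts evaluated at two coordinates vanishes, provided some translation
flips the sign of the combined contrast. -/
lemma master_aux (K N r : ℕ) (A B : Finset (Fin K)) (i j : Fin N)
    (h : ∃ t : Combo K, gA K A t * gA K B t = -1) :
    ∑ ω ∈ Assignments K N r, gA K A (ω i) * gA K B (ω j) = 0 := by
  classical
  obtain ⟨t, ht⟩ := h
  set φ : (Fin N → Combo K) → (Fin N → Combo K) :=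
    fun ω => fun i' => fun k => (ω i' k == t k) with hφ
  have hinv : ∀ ω, φ (φ ω) = ω := by
    intro ω
    funext i' k
    simp only [hφ]
    cases ω i' k <;> cases t k <;> rfl
  have hmem : ∀ ω ∈ Assignments K N r, φ ω ∈ Assignments K N r := by
    intro ω hω
    exact xor_mem_assignments_aux K N r t ω hω
  have hreindex : ∑ ω ∈ Assignments K N r, gA K A ((φ ω) i) * gA K B ((φ ω) j)
      = ∑ ω ∈ Assignments K N r, gA K A (ω i) * gA K B (ω j) := by
    exact Finset.sum_nbij' φ φ hmem hmem (fun a _ => hinv a) (fun a _ => hinv a)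
      (fun a _ => rfl)
  have hpt : ∀ ω : Fin N → Combo K,
      gA K A ((φ ω) i) * gA K B ((φ ω) j) = -(gA K A (ω i) * gA K B (ω j)) := by
    intro ω
    have h1 : (φ ω) i = fun k => (ω i k == t k) := rfl
    have h2 : (φ ω) j = fun k => (ω j k == t k) := rfl
    rw [h1, h2, gA_xor_aux, gA_xor_aux]
    ring_nf
    rw [show gA K A (ω i) * gA K A t * gA K B (ω j) * gA K B t
        = gA K A (ω i) * gA K B (ω j) * (gA K A t * gA K B t) by ring, ht]
    ring
  rw [Finset.sum_congr rfl (fun ω _ => hpt ω), Finset.sum_neg_distrib] at hreindex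
  linarith

/-- Corollary 4. Under strict additivity, distinct estimated
factorial effects are uncorrelated. -/
theorem tauHat_uncorrelated_additive (K N r : ℕ) (hK : 1 ≤ K) (hr : 0 < r)
    (hN : N = r * 2 ^ K) (Y : Fin N → Combo K → ℝ)
    (hadd : StrictAdditivity K N Y)
    (A B : Finset (Fin K)) (hA : A.Nonempty) (hB : B.Nonempty) (hAB : A ≠ B) :
    covariance K N r (tauHat K N r Y A) (tauHat K N r Y B) = 0 := by
  classical
  by_cases hc : Assignments K N r = ∅
  · simp [covariance, _root_.expect, hc]
  have hcard : ((Assignments K N r).card : ℝ) ≠ 0 := by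
    simp [Finset.card_eq_zero, hc]
  have hNpos : 0 < N := by
    rw [hN]; positivity
  set i₀ : Fin N := ⟨0, hNpos⟩ with hi₀
  set z₀ : Combo K := fun _ => false with hz₀
  set μ : Fin N → ℝ := fun i => Y i z₀ with hμ
  set CC : Finset (Fin K) → ℝ := fun S =>
    (∑ z : Combo K, gA K S z * (Y i₀ z - Y i₀ z₀)) / (2:ℝ)^(K-1) with hCC
  set c₀ : ℝ := 1 / ((r:ℝ) * (2:ℝ)^(K-1)) with hc₀
  set L : Finset (Fin K) → (Fin N → Combo K) → ℝ :=
    fun S ω => ∑ i, gA K S (ω i) * μ i with hL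
  have hrne : (r:ℝ) ≠ 0 := Nat.cast_ne_zero.mpr hr.ne'
  have h2ne : ((2:ℝ)^(K-1)) ≠ 0 := by positivity
  -- representation of tauHat on assignments
  have rep : ∀ S : Finset (Fin K), ∀ ω ∈ Assignments K N r,
      tauHat K N r Y S ω = CC S + c₀ * L S ω := by
    intro S ω hω
    have hcount : ∀ z : Combo K, (Finset.univ.filter (fun i => ω i = z)).card = r := by
      simpa [Assignments] using hω
    have hY : ∀ (i : Fin N) (z : Combo K), Y i z = μ i + (Y i₀ z - Y i₀ z₀) := by
      intro i z
      have h := hadd z z₀ i i₀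
      simp only [hμ]
      linarith
    have hobs : ∀ z : Combo K, YbarObs K N r Y ω z
        = (Y i₀ z - Y i₀ z₀) + (∑ i, if ω i = z then μ i else 0) / (r:ℝ) := by
      intro z
      unfold YbarObs
      have hsplit : (∑ i, if ω i = z then Y i z else 0)
          = (∑ i, if ω i = z then μ i else 0)
            + (∑ i, if ω i = z then (Y i₀ z - Y i₀ z₀) else 0) := by
        rw [← Finset.sum_add_distrib]
        apply Finset.sum_congr rfl
        intro i _
        by_cases h : ω i = z <;> simp [h, hY i z]
      have hconst : (∑ i, if ω i = z then (Y i₀ z - Y i₀ z₀) else 0)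
          = (r:ℝ) * (Y i₀ z - Y i₀ z₀) := by
        rw [← Finset.sum_filter, Finset.sum_const, hcount z, nsmul_eq_mul]
      rw [hsplit, hconst]
      field_simp
      ring
    unfold tauHat
    have e1 : (∑ z : Combo K, gA K S z * YbarObs K N r Y ω z)
        = ∑ z : Combo K, (gA K S z * (Y i₀ z - Y i₀ z₀)
            + gA K S z * (∑ i, if ω i = z then μ i else 0) / (r:ℝ)) := by
      apply Finset.sum_congr rfl
      intro z _
      rw [hobs z]
      ring
    have e2 : (∑ z : Combo K, gA K S z * (∑ i, if ω i = z then μ i else 0) / (r:ℝ))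
        = L S ω / (r:ℝ) := by
      show _ = (∑ i, gA K S (ω i) * μ i) / (r:ℝ)
      rw [← Finset.sum_div]
      congr 1
      calc ∑ z : Combo K, gA K S z * (∑ i, if ω i = z then μ i else 0)
          = ∑ z : Combo K, ∑ i, (if ω i = z then gA K S z * μ i else 0) := by
            apply Finset.sum_congr rfl
            intro z _
            rw [Finset.mul_sum]
            apply Finset.sum_congr rfl
            intro i _
            by_cases h : ω i = z <;> simp [h]
        _ = ∑ i, ∑ z : Combo K, (if ω i = z then gA K S z * μ i else 0) :=
            Finset.sum_comm
        _ = ∑ i, gA K S (ω i) * μ i := by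
            apply Finset.sum_congr rfl
            intro i _
            rw [Finset.sum_ite_eq]
            simp
    rw [e1, Finset.sum_add_distrib, e2]
    simp only [hCC, hc₀, hL]
    field_simp
  -- key vanishing sums
  have hLzero : ∀ S : Finset (Fin K), S ≠ ∅ →
      ∑ ω ∈ Assignments K N r, L S ω = 0 := by
    intro S hS
    show ∑ ω ∈ Assignments K N r, ∑ i, gA K S (ω i) * μ i = 0
    rw [Finset.sum_comm]
    apply Finset.sum_eq_zero
    intro i _
    have h := master_aux K N r S ∅ i i (exists_flip_aux K S ∅ hS)
    have hE1 : ∀ ω ∈ Assignments K N r,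
        gA K S (ω i) * gA K ∅ (ω i) = gA K S (ω i) := by
      intro ω _
      simp [gA]
    rw [Finset.sum_congr rfl hE1] at h
    rw [← Finset.sum_mul, h, zero_mul]
  have hLL : ∑ ω ∈ Assignments K N r, L A ω * L B ω = 0 := by
    show ∑ ω ∈ Assignments K N r,
        (∑ i, gA K A (ω i) * μ i) * (∑ j, gA K B (ω j) * μ j) = 0
    have hexp : ∀ ω ∈ Assignments K N r,
        (∑ i, gA K A (ω i) * μ i) * (∑ j, gA K B (ω j) * μ j)
        = ∑ i, ∑ j, (μ i * μ j) * (gA K A (ω i) * gA K B (ω j)) := by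
      intro ω _
      rw [Finset.sum_mul_sum]
      apply Finset.sum_congr rfl
      intro i _
      apply Finset.sum_congr rfl
      intro j _
      ring
    rw [Finset.sum_congr rfl hexp, Finset.sum_comm]
    apply Finset.sum_eq_zero
    intro i _
    rw [Finset.sum_comm]
    apply Finset.sum_eq_zero
    intro j _
    rw [← Finset.mul_sum, master_aux K N r A B i j (exists_flip_aux K A B hAB),
      mul_zero]
  -- expectations
  have hEt : ∀ S : Finset (Fin K), S ≠ ∅ →
      _root_.expect K N r (tauHat K N r Y S) = CC S := by
    intro S hS
    unfold _root_.expect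
    rw [Finset.sum_congr rfl (rep S), Finset.sum_add_distrib, Finset.sum_const,
      ← Finset.mul_sum, hLzero S hS, mul_zero, add_zero, nsmul_eq_mul]
    exact mul_div_cancel_left₀ _ hcard
  -- conclude
  unfold covariance
  rw [hEt A hA.ne_empty, hEt B hB.ne_empty]
  unfold _root_.expect
  have hfin : ∀ ω ∈ Assignments K N r,
      (tauHat K N r Y A ω - CC A) * (tauHat K N r Y B ω - CC B)
      = (c₀ * c₀) * (L A ω * L B ω) := by
    intro ω hω
    rw [rep A ω hω, rep B ω hω]
    ring
  rw [Finset.sum_congr rfl hfin, ← Finset.mul_sum, hLL, mul_zero, zero_div]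
end
end
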